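/- arXiv:2108.02895 — 9 statements merged into one kernel-verified Lean document; each statement's English description precedes it below -/
import Mathlib

section
/- For subspaces Y₁, Y₂ of X, one has TC_X(Y₁ × Y₂) ≤ TC(Y₁ ∪ Y₂), where TC(Y₁ ∪ Y₂) is the (absolute) topological complexity of the subspace Y₁ ∪ Y₂. -/
open Set

/-- The relative topological complexity `TC_X(A)` for `A ⊆ X × X`. -/
noncomputable def relTC (X : Type*) [TopologicalSpace X] (A : Set (X × X)) : ℕ∞ :=
  sInf {N : ℕ∞ | ∃ k : ℕ, N = k ∧ ∃ U : Fin k → Set A,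
    (∀ i, IsOpen (U i)) ∧ (⋃ i, U i) = univ ∧
    ∀ i, ∃ s : C(U i, C(unitInterval, X)),
      ∀ p : U i, s p 0 = (p.1.1 : X × X).1 ∧ s p 1 = (p.1.1 : X × X).2}

/-- The (absolute) topological complexity `topComplexity(X) = TC_X(X × X)`. -/
noncomputable def topComplexity (X : Type*) [TopologicalSpace X] : ℕ∞ :=
  relTC X univ

theorem stmt3 (X : Type*) [TopologicalSpace X] (Y₁ Y₂ : Set X) :
    relTC X (Y₁ ×ˢ Y₂) ≤ topComplexity ↥(Y₁ ∪ Y₂) := by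
  apply sInf_le_sInf
  rintro N hN
  obtain ⟨k, rfl, U, hUo, hUc, hs⟩ := hN
  refine ⟨k, rfl, ?_⟩
  let f : ↥(Y₁ ×ˢ Y₂) → ↥(univ : Set (↥(Y₁ ∪ Y₂) × ↥(Y₁ ∪ Y₂))) :=
    fun p => ⟨(⟨p.1.1, Set.mem_union_left _ p.2.1⟩, ⟨p.1.2, Set.mem_union_right _ p.2.2⟩),
      mem_univ _⟩
  have hf : Continuous f := by
    apply Continuous.subtype_mk
    apply Continuous.prodMk
    · exact Continuous.subtype_mk (continuous_fst.comp continuous_subtype_val) _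
    · exact Continuous.subtype_mk (continuous_snd.comp continuous_subtype_val) _
  refine ⟨fun i => f ⁻¹' U i, fun i => (hUo i).preimage hf, ?_, ?_⟩
  · ext p
    simp only [mem_iUnion, mem_preimage, mem_univ, iff_true]
    have : f p ∈ ⋃ i, U i := hUc ▸ mem_univ _
    exact mem_iUnion.mp this
  · intro i
    obtain ⟨s, hsend⟩ := hs i
    let ι : C(↥(Y₁ ∪ Y₂), X) := ⟨Subtype.val, continuous_subtype_val⟩
    refine ⟨⟨fun p => ι.comp (s ⟨f p.1, p.2⟩), ?_⟩, ?_⟩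
    · exact (ContinuousMap.continuous_postcomp ι).comp
        (s.continuous.comp (Continuous.subtype_mk (hf.comp continuous_subtype_val) _))
    · intro p
      constructor
      · show ι ((s ⟨f p.1, p.2⟩) 0) = _
        rw [(hsend ⟨f p.1, p.2⟩).1]; rfl
      · show ι ((s ⟨f p.1, p.2⟩) 1) = _
        rw [(hsend ⟨f p.1, p.2⟩).2]; rfl
end

section
/- Let Y₁ and Y₂ be subspaces of a path-connected space X. Then TC_X(Y₁ × Y₂) = 1 if and only if the inclusions Y₁ ↪ X and Y₂ ↪ X are both nullhomotopic. -/
open Set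

/-- For nonempty subspaces `Y₁, Y₂` of a path-connected space `X`,
`TC_X(Y₁ × Y₂) = 1` iff the inclusions `Y₁ ↪ X` and `Y₂ ↪ X` are both nullhomotopic. -/
theorem stmt5 (X : Type*) [TopologicalSpace X] [PathConnectedSpace X]
    (Y₁ Y₂ : Set X) (h₁ : Y₁.Nonempty) (h₂ : Y₂.Nonempty) :
    relTC X (Y₁ ×ˢ Y₂) = 1 ↔
      (ContinuousMap.Nullhomotopic
          (⟨Subtype.val, continuous_subtype_val⟩ : C(Y₁, X)) ∧
       ContinuousMap.Nullhomotopic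
          (⟨Subtype.val, continuous_subtype_val⟩ : C(Y₂, X))) := by
  obtain ⟨a, ha⟩ := h₁
  obtain ⟨b, hb⟩ := h₂
  have hab : ((a, b) : X × X) ∈ Y₁ ×ˢ Y₂ := ⟨ha, hb⟩
  constructor
  · intro h
    have hne : {N : ℕ∞ | ∃ k : ℕ, N = k ∧ ∃ U : Fin k → Set ↥(Y₁ ×ˢ Y₂),
        (∀ i, IsOpen (U i)) ∧ (⋃ i, U i) = univ ∧
        ∀ i, ∃ s : C(U i, C(unitInterval, X)),
          ∀ p : U i, s p 0 = (p.1.1 : X × X).1 ∧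
            s p 1 = (p.1.1 : X × X).2}.Nonempty := by
      by_contra hc
      rw [Set.not_nonempty_iff_eq_empty] at hc
      rw [relTC, hc, sInf_empty] at h
      exact (by simp : (⊤ : ℕ∞) ≠ 1) h
    have hmem := csInf_mem hne
    rw [show sInf _ = relTC X (Y₁ ×ˢ Y₂) from rfl, h] at hmem
    obtain ⟨k, hk, U, hUopen, hUcov, hs⟩ := hmem
    have hk1 : k = 1 := by exact_mod_cast hk.symm
    subst hk1
    obtain ⟨s, hsp⟩ := hs 0
    have hU0 : U 0 = univ := by
      rw [← hUcov]
      exact (subset_iUnion U 0).antisymm (iUnion_subset fun i => by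
        rw [Subsingleton.elim i 0])
    have hmemU : ∀ p : ↥(Y₁ ×ˢ Y₂), p ∈ U 0 := fun p => hU0 ▸ mem_univ p
    constructor
    · refine ⟨b, ⟨?_⟩⟩
      let g : C(Y₁, ↥(U 0)) :=
        ⟨fun y => ⟨⟨(y.1, b), ⟨y.2, hb⟩⟩, hmemU _⟩,
          Continuous.subtype_mk (Continuous.subtype_mk
            (continuous_subtype_val.prodMk continuous_const) _) _⟩
      exact
        { toFun := fun q => s (g q.2) q.1
          continuous_toFun :=
            ((s.comp g).uncurry.comp
              (⟨Prod.swap, continuous_swap⟩ :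
                C(unitInterval × Y₁, Y₁ × unitInterval))).continuous
          map_zero_left := fun y => (hsp (g y)).1
          map_one_left := fun y => (hsp (g y)).2 }
    · refine ⟨a, ContinuousMap.Homotopic.symm ⟨?_⟩⟩
      let g : C(Y₂, ↥(U 0)) :=
        ⟨fun y => ⟨⟨(a, y.1), ⟨ha, y.2⟩⟩, hmemU _⟩,
          Continuous.subtype_mk (Continuous.subtype_mk
            (continuous_const.prodMk continuous_subtype_val) _) _⟩
      exact
        { toFun := fun q => s (g q.2) q.1
          continuous_toFun :=
            ((s.comp g).uncurry.comp
              (⟨Prod.swap, continuous_swap⟩ :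
                C(unitInterval × Y₂, Y₂ × unitInterval))).continuous
          map_zero_left := fun y => (hsp (g y)).1
          map_one_left := fun y => (hsp (g y)).2 }
  · rintro ⟨⟨x₁, hH₁⟩, ⟨x₂, hH₂⟩⟩
    set A := Y₁ ×ˢ Y₂ with hA
    let f₁ : C(↥A, X) := ⟨fun p => p.1.1, (continuous_fst.comp continuous_subtype_val)⟩
    let f₂ : C(↥A, X) := ⟨fun p => p.1.2, (continuous_snd.comp continuous_subtype_val)⟩
    let π₁ : C(↥A, Y₁) := ⟨fun p => ⟨p.1.1, p.2.1⟩,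
      Continuous.subtype_mk (continuous_fst.comp continuous_subtype_val) _⟩
    let π₂ : C(↥A, Y₂) := ⟨fun p => ⟨p.1.2, p.2.2⟩,
      Continuous.subtype_mk (continuous_snd.comp continuous_subtype_val) _⟩
    have hc₁ : f₁.Homotopic (ContinuousMap.const _ x₁) := by
      have := ContinuousMap.Homotopic.comp hH₁ (ContinuousMap.Homotopic.refl π₁)
      rwa [ContinuousMap.const_comp] at this
    have hc₂ : f₂.Homotopic (ContinuousMap.const _ x₂) := by
      have := ContinuousMap.Homotopic.comp hH₂ (ContinuousMap.Homotopic.refl π₂)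
      rwa [ContinuousMap.const_comp] at this
    have hconst : (ContinuousMap.const (↥A) x₁).Homotopic (ContinuousMap.const _ x₂) := by
      let γ := PathConnectedSpace.somePath x₁ x₂
      exact ⟨{ toFun := fun q => γ q.1
               continuous_toFun := γ.continuous.comp continuous_fst
               map_zero_left := fun _ => γ.source
               map_one_left := fun _ => γ.target }⟩
    obtain ⟨F⟩ := (hc₁.trans hconst).trans hc₂.symm
    have h1mem : (1 : ℕ∞) ∈ {N : ℕ∞ | ∃ k : ℕ, N = k ∧ ∃ U : Fin k → Set ↥A,
        (∀ i, IsOpen (U i)) ∧ (⋃ i, U i) = univ ∧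
        ∀ i, ∃ s : C(U i, C(unitInterval, X)),
          ∀ p : U i, s p 0 = (p.1.1 : X × X).1 ∧ s p 1 = (p.1.1 : X × X).2} := by
      refine ⟨1, by norm_num, fun _ => univ, fun _ => isOpen_univ, iUnion_const _, fun _ => ?_⟩
      refine ⟨((F.toContinuousMap.comp
          (⟨Prod.swap, continuous_swap⟩ :
            C(↥A × unitInterval, unitInterval × ↥A))).curry).comp
          (⟨Subtype.val, continuous_subtype_val⟩ : C(↥(univ : Set ↥A), ↥A)), fun p => ?_⟩
      exact ⟨F.map_zero_left p.1, F.map_one_left p.1⟩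
    refine le_antisymm (sInf_le h1mem) (le_sInf ?_)
    rintro N ⟨k, rfl, U, -, hUcov, -⟩
    have hk : k ≠ 0 := by
      rintro rfl
      have : (⟨(a, b), hab⟩ : ↥A) ∈ (⋃ i : Fin 0, U i) := hUcov ▸ mem_univ _
      simp at this
    exact_mod_cast Nat.one_le_iff_ne_zero.2 hk
end

section
/- If Y₁ and Y₂ are proper subspaces of the sphere Sⁿ, then TC_{Sⁿ}(Y₁ × Y₂) = 1; i.e., there is a continuous map assigning to each pair (y₁, y₂) ∈ Y₁ × Y₂ a path in Sⁿ from y₁ to y₂. -/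
open Set Metric

noncomputable section

local notation "E" n => EuclideanSpace ℝ (Fin (n + 1))
local notation "Sph" n => Metric.sphere (0 : EuclideanSpace ℝ (Fin (n + 1))) 1

lemma sph_norm {n : ℕ} (y : Sph n) : ‖(y : E n)‖ = 1 :=
  mem_sphere_zero_iff_norm.mp y.2

lemma seg_ne_zero {n : ℕ} (y a : Sph n) (hya : y ≠ a) (t : ℝ) :
    (1 - t) • (y : E n) + t • (-(a : E n)) ≠ 0 := by
  intro h
  have hy : ‖(y : E n)‖ = 1 := sph_norm y
  have ha : ‖(a : E n)‖ = 1 := sph_norm a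
  have h' : (1 - t) • (y : E n) = t • (a : E n) := by
    rw [smul_neg] at h; linear_combination (norm := module) h
  have hnorm : |1 - t| = |t| := by
    have := congrArg norm h'
    simpa [norm_smul, hy, ha] using this
  have ht : t = 1/2 := by
    rcases abs_eq_abs.mp hnorm with h1 | h1 <;> linarith
  rw [ht] at h'
  exact hya (Subtype.ext (by linear_combination (norm := module) (2:ℝ) • h'))

def negS {n : ℕ} (a : Sph n) : Sph n :=
  ⟨-(a : E n), by simpa [mem_sphere_zero_iff_norm] using sph_norm a⟩

/-- straight-line contraction (normalized) of `Y` to `-a` where `a ∉ Y` -/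
def segFun {n : ℕ} (Y : Set (Sph n)) (a : Sph n) (q : ↥Y × ℝ) : E n :=
  (1 - q.2) • ((q.1 : Sph n) : E n) + q.2 • (-(a : E n))

lemma segFun_ne_zero {n : ℕ} {Y : Set (Sph n)} {a : Sph n} (ha : a ∉ Y)
    (q : ↥Y × ℝ) : segFun Y a q ≠ 0 :=
  seg_ne_zero _ _ (fun h => ha (by rw [← h]; exact q.1.2)) _

def cm {n : ℕ} (Y : Set (Sph n)) (a : Sph n) (ha : a ∉ Y) : ↥Y × ℝ → Sph n :=
  fun q => ⟨‖segFun Y a q‖⁻¹ • segFun Y a q, by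
    rw [mem_sphere_zero_iff_norm, norm_smul, norm_inv, norm_norm,
      inv_mul_cancel₀ (norm_ne_zero_iff.mpr (segFun_ne_zero ha q))]⟩

lemma cm_continuous {n : ℕ} (Y : Set (Sph n)) (a : Sph n) (ha : a ∉ Y) :
    Continuous (cm Y a ha) := by
  apply Continuous.subtype_mk
  have hv : Continuous (segFun Y a) := by
    unfold segFun
    fun_prop
  exact ((hv.norm).inv₀ (fun q => norm_ne_zero_iff.mpr (segFun_ne_zero ha q))).smul hv

lemma cm_zero {n : ℕ} (Y : Set (Sph n)) (a : Sph n) (ha : a ∉ Y) (y : ↥Y) :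
    cm Y a ha (y, 0) = (y : Sph n) := by
  apply Subtype.ext
  show ‖segFun Y a (y,0)‖⁻¹ • segFun Y a (y,0) = _
  simp [segFun, sph_norm]

lemma cm_one {n : ℕ} (Y : Set (Sph n)) (a : Sph n) (ha : a ∉ Y) (y : ↥Y) :
    cm Y a ha (y, 1) = negS a := by
  apply Subtype.ext
  show ‖segFun Y a (y,1)‖⁻¹ • segFun Y a (y,1) = _
  simp [segFun, negS, norm_neg, sph_norm]

end

open Set

/-- If `Y₁` and `Y₂` are proper subspaces of the sphere `Sⁿ` (`n ≥ 1`), then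
`TC_{Sⁿ}(Y₁ × Y₂) = 1`: there is a continuous map assigning to each pair
`(y₁, y₂) ∈ Y₁ × Y₂` a path in `Sⁿ` from `y₁` to `y₂`. -/
theorem stmt6 (n : ℕ) (hn : 1 ≤ n)
    (Y₁ Y₂ : Set (Metric.sphere (0 : EuclideanSpace ℝ (Fin (n + 1))) 1))
    (h₁ : Y₁ ≠ univ) (h₂ : Y₂ ≠ univ) :
    ∃ s : C(Y₁ × Y₂, C(unitInterval, Metric.sphere (0 : EuclideanSpace ℝ (Fin (n + 1))) 1)),
      ∀ p : Y₁ × Y₂, s p 0 = (p.1 : Metric.sphere (0 : EuclideanSpace ℝ (Fin (n + 1))) 1)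
        ∧ s p 1 = (p.2 : Metric.sphere (0 : EuclideanSpace ℝ (Fin (n + 1))) 1) := by
  classical
  obtain ⟨a, ha⟩ := (ne_univ_iff_exists_notMem _).mp h₁
  obtain ⟨b, hb⟩ := (ne_univ_iff_exists_notMem _).mp h₂
  -- path from -a to -b in the sphere
  have hrank : 1 < Module.rank ℝ (EuclideanSpace ℝ (Fin (n + 1))) := by
    rw [← Module.finrank_eq_rank ℝ, finrank_euclideanSpace_fin]
    exact_mod_cast Nat.lt_of_lt_of_le Nat.one_lt_two (by omega)
  have hpc := isPathConnected_sphere hrank (0 : EuclideanSpace ℝ (Fin (n + 1))) zero_le_one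
  have hj : Joined (negS a) (negS b) :=
    (hpc.joinedIn _ (negS a).2 _ (negS b).2).joined_subtype
  let γ : Path (negS a) (negS b) := hj.somePath
  -- the global map
  let G : (↥Y₁ × ↥Y₂) × ℝ → Metric.sphere (0 : EuclideanSpace ℝ (Fin (n + 1))) 1 :=
    fun q => if q.2 ≤ 1/3 then cm Y₁ a ha (q.1.1, 3 * q.2)
      else if q.2 ≤ 2/3 then γ.extend (3 * q.2 - 1)
      else cm Y₂ b hb (q.1.2, 3 - 3 * q.2)
  have hG : Continuous G := by
    apply Continuous.if_le
    · exact (cm_continuous Y₁ a ha).comp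
        ((continuous_fst.fst).prodMk (continuous_const.mul continuous_snd))
    · apply Continuous.if_le
      · exact γ.continuous_extend.comp ((continuous_const.mul continuous_snd).sub continuous_const)
      · exact (cm_continuous Y₂ b hb).comp
          ((continuous_fst.snd).prodMk (continuous_const.sub (continuous_const.mul continuous_snd)))
      · exact continuous_snd
      · exact continuous_const
      · intro q hq
        rw [hq]
        norm_num
        exact (cm_one Y₂ b hb q.1.2).symm
    · exact continuous_snd
    · exact continuous_const
    · intro q hq
      rw [hq, if_pos (by norm_num : (1:ℝ)/3 ≤ 2/3),
        show (3 : ℝ) * (1/3) - 1 = 0 from by norm_num,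
        show (3 : ℝ) * (1/3) = 1 from by norm_num, γ.extend_zero]
      exact cm_one Y₁ a ha q.1.1
  refine ⟨ContinuousMap.curry ⟨fun q => G (q.1, (q.2 : ℝ)),
    hG.comp (continuous_fst.prodMk (continuous_subtype_val.comp continuous_snd))⟩, ?_⟩
  intro p
  constructor
  · show G (p, ((0 : unitInterval) : ℝ)) = _
    simp only [G, Set.Icc.coe_zero]
    rw [if_pos (by norm_num : (0:ℝ) ≤ 1/3)]
    simpa using cm_zero Y₁ a ha p.1
  · show G (p, ((1 : unitInterval) : ℝ)) = _
    simp only [G, Set.Icc.coe_one]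
    rw [if_neg (by norm_num : ¬ (1:ℝ) ≤ 1/3), if_neg (by norm_num : ¬ (1:ℝ) ≤ 2/3)]
    simpa using cm_zero Y₂ b hb p.2
end

section
/- Let Y₁, Y₂ ⊆ X and Y₁', Y₂' ⊆ X', and suppose there are continuous maps f : X → X', f' : X' → X, α_j : Y_j → Y_j', α_j' : Y_j' → Y_j (j = 1, 2) such that for each j, ι_j' ≃ f ∘ ι_j ∘ α_j' and ι_j ≃ f' ∘ ι_j' ∘ α_j (homotopy of maps into X' and X, respectively), where ι_j, ι_j' denote inclusions. Then TC_{X'}(Y₁' × Y₂') = TC_X(Y₁ × Y₂). -/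
open Set

/-- The inclusion of a subspace, as a continuous map. -/
def incl {X : Type*} [TopologicalSpace X] (Y : Set X) : C(Y, X) :=
  ⟨Subtype.val, continuous_subtype_val⟩

theorem relTC_le_of_maps {X X' : Type*} [TopologicalSpace X] [TopologicalSpace X']
    (Y₁ Y₂ : Set X) (Y₁' Y₂' : Set X')
    (f : C(X, X')) (α₁' : C(Y₁', Y₁)) (α₂' : C(Y₂', Y₂))
    (h₁ : (incl Y₁').Homotopic (f.comp ((incl Y₁).comp α₁')))
    (h₂ : (incl Y₂').Homotopic (f.comp ((incl Y₂).comp α₂'))) :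
    relTC X' (Y₁' ×ˢ Y₂') ≤ relTC X (Y₁ ×ˢ Y₂) := by
  obtain ⟨H₁⟩ := h₁
  obtain ⟨H₂⟩ := h₂
  apply sInf_le_sInf
  rintro N ⟨k, rfl, U, hUo, hUc, hUs⟩
  -- the comparison map on pairs
  let g : C(↥(Y₁' ×ˢ Y₂'), ↥(Y₁ ×ˢ Y₂)) :=
    ⟨fun p => ⟨(α₁' ⟨p.1.1, p.2.1⟩, α₂' ⟨p.1.2, p.2.2⟩),
      Set.mk_mem_prod (α₁' ⟨p.1.1, p.2.1⟩).2 (α₂' ⟨p.1.2, p.2.2⟩).2⟩,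
      by
        apply Continuous.subtype_mk
        exact ((continuous_subtype_val.comp α₁'.continuous).comp
            (((continuous_fst.comp continuous_subtype_val)).subtype_mk _)).prodMk
          ((continuous_subtype_val.comp α₂'.continuous).comp
            (((continuous_snd.comp continuous_subtype_val)).subtype_mk _))⟩
  refine ⟨k, rfl, fun i => g ⁻¹' U i, fun i => (hUo i).preimage g.continuous, ?_, ?_⟩
  · apply eq_univ_of_forall
    intro q
    have hq : g q ∈ ⋃ i, U i := by rw [hUc]; trivial
    obtain ⟨i, hi⟩ := mem_iUnion.1 hq
    exact mem_iUnion.2 ⟨i, hi⟩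
  · intro i
    obtain ⟨s, hs⟩ := hUs i
    -- maps out of the piece V := g ⁻¹' U i
    let V : Set ↥(Y₁' ×ˢ Y₂') := g ⁻¹' U i
    let gU : C(V, U i) :=
      ⟨fun q => ⟨g q.1, q.2⟩, (g.continuous.comp continuous_subtype_val).subtype_mk _⟩
    let c₁ : C(V, Y₁') :=
      ⟨fun q => ⟨q.1.1.1, q.1.2.1⟩,
        (continuous_fst.comp (continuous_subtype_val.comp continuous_subtype_val)).subtype_mk _⟩
    let c₂ : C(V, Y₂') :=
      ⟨fun q => ⟨q.1.1.2, q.1.2.2⟩,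
        (continuous_snd.comp (continuous_subtype_val.comp continuous_subtype_val)).subtype_mk _⟩
    -- the three homotopies
    let F₁ : ContinuousMap.Homotopy ((incl Y₁').comp c₁)
        ((f.comp ((incl Y₁).comp α₁')).comp c₁) :=
      H₁.comp (ContinuousMap.Homotopy.refl c₁)
    let F₃ : ContinuousMap.Homotopy ((f.comp ((incl Y₂).comp α₂')).comp c₂)
        ((incl Y₂').comp c₂) :=
      (H₂.comp (ContinuousMap.Homotopy.refl c₂)).symm
    have hcont : Continuous fun tq : unitInterval × V => f (s (gU tq.2) tq.1) :=
      f.continuous.comp <| ContinuousEval.continuous_eval.comp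
        ((s.continuous.comp (gU.continuous.comp continuous_snd)).prodMk continuous_fst)
    let F₂ : ContinuousMap.Homotopy ((f.comp ((incl Y₁).comp α₁')).comp c₁)
        ((f.comp ((incl Y₂).comp α₂')).comp c₂) :=
      { toFun := fun tq => f (s (gU tq.2) tq.1)
        continuous_toFun := hcont
        map_zero_left := fun q => by
          show f (s (gU q) 0) = _
          rw [(hs (gU q)).1]
          rfl
        map_one_left := fun q => by
          show f (s (gU q) 1) = _
          rw [(hs (gU q)).2]
          rfl }
    let F : ContinuousMap.Homotopy ((incl Y₁').comp c₁) ((incl Y₂').comp c₂) :=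
      (F₁.trans F₂).trans F₃
    refine ⟨(F.toContinuousMap.comp ⟨Prod.swap, continuous_swap⟩).curry, fun p => ?_⟩
    constructor
    · show F (0, p) = _
      rw [F.apply_zero]
      rfl
    · show F (1, p) = _
      rw [F.apply_one]
      rfl

/-- Homotopy invariance of relative topological complexity: if the squares
`ι_j' ≃ f ∘ ι_j ∘ α_j'` and `ι_j ≃ f' ∘ ι_j' ∘ α_j` commute up to homotopy for
`j = 1, 2`, then `TC_{X'}(Y₁' × Y₂') = TC_X(Y₁ × Y₂)`. -/
theorem stmt7 (X X' : Type*) [TopologicalSpace X] [TopologicalSpace X']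
    (Y₁ Y₂ : Set X) (Y₁' Y₂' : Set X')
    (f : C(X, X')) (f' : C(X', X))
    (α₁ : C(Y₁, Y₁')) (α₂ : C(Y₂, Y₂'))
    (α₁' : C(Y₁', Y₁)) (α₂' : C(Y₂', Y₂))
    (h₁ : (incl Y₁').Homotopic (f.comp ((incl Y₁).comp α₁')))
    (h₂ : (incl Y₂').Homotopic (f.comp ((incl Y₂).comp α₂')))
    (h₃ : (incl Y₁).Homotopic (f'.comp ((incl Y₁').comp α₁)))
    (h₄ : (incl Y₂).Homotopic (f'.comp ((incl Y₂').comp α₂))) :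
    relTC X' (Y₁' ×ˢ Y₂') = relTC X (Y₁ ×ˢ Y₂) :=
  le_antisymm (relTC_le_of_maps Y₁ Y₂ Y₁' Y₂' f α₁' α₂' h₁ h₂)
    (relTC_le_of_maps Y₁' Y₂' Y₁ Y₂ f' α₁ α₂ h₃ h₄)
end

section
/- If f : X → X' is a homotopy equivalence which restricts to homotopy equivalences Y_j → Y_j' (j = 1, 2) between subspaces Y_j ⊆ X and Y_j' ⊆ X', then TC_X(Y₁ × Y₂) = TC_{X'}(Y₁' × Y₂'). -/
open Set

/-- A continuous map is a homotopy equivalence if it has a homotopy inverse. -/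
def IsHomotopyEquivalence {A B : Type*} [TopologicalSpace A] [TopologicalSpace B]
    (f : C(A, B)) : Prop :=
  ∃ g : C(B, A), (g.comp f).Homotopic (ContinuousMap.id A) ∧
    (f.comp g).Homotopic (ContinuousMap.id B)

/-- The restriction of `f` to a map of subspaces `Y → Y'`. -/
def restrictMap {X X' : Type*} [TopologicalSpace X] [TopologicalSpace X']
    (f : C(X, X')) {Y : Set X} {Y' : Set X'} (h : Set.MapsTo f Y Y') : C(Y, Y') :=
  ⟨h.restrict f Y Y', f.continuous.restrict h⟩

/-- The inclusion of a subspace. -/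
def inclMap {X : Type*} [TopologicalSpace X] (Y : Set X) : C(Y, X) :=
  ⟨Subtype.val, continuous_subtype_val⟩

/-- Key lemma: given `u_j : Y_j' → Y_j` and `ψ : X → X'` with `ψ ∘ ι ∘ u_j` homotopic
to the inclusion `ι' : Y_j' → X'`, we get `TC_{X'}(Y₁'×Y₂') ≤ TC_X(Y₁×Y₂)`. -/
lemma relTC_le_aux {X X' : Type*} [TopologicalSpace X] [TopologicalSpace X']
    (Y₁ Y₂ : Set X) (Y₁' Y₂' : Set X')
    (u₁ : C(Y₁', Y₁)) (u₂ : C(Y₂', Y₂)) (ψ : C(X, X'))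
    (h₁ : (ψ.comp ((inclMap Y₁).comp u₁)).Homotopic (inclMap Y₁'))
    (h₂ : (ψ.comp ((inclMap Y₂).comp u₂)).Homotopic (inclMap Y₂')) :
    relTC X' (Y₁' ×ˢ Y₂') ≤ relTC X (Y₁ ×ˢ Y₂) := by
  obtain ⟨H₁⟩ := h₁
  obtain ⟨H₂⟩ := h₂
  apply sInf_le_sInf
  rintro N ⟨k, rfl, U, hUo, hUc, hUs⟩
  refine ⟨k, rfl, ?_⟩
  -- the comparison map `Φ : Y₁' ×ˢ Y₂' → Y₁ ×ˢ Y₂`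
  have hΦc : Continuous (fun q : (Y₁' ×ˢ Y₂' : Set (X' × X')) =>
      (⟨(u₁ ⟨q.1.1, q.2.1⟩, u₂ ⟨q.1.2, q.2.2⟩),
        ⟨(u₁ ⟨q.1.1, q.2.1⟩).2, (u₂ ⟨q.1.2, q.2.2⟩).2⟩⟩ :
        (Y₁ ×ˢ Y₂ : Set (X × X)))) := by
    refine Continuous.subtype_mk (Continuous.prodMk ?_ ?_) _
    · exact continuous_subtype_val.comp (u₁.continuous.comp
        (Continuous.subtype_mk (continuous_fst.comp continuous_subtype_val) _))
    · exact continuous_subtype_val.comp (u₂.continuous.comp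
        (Continuous.subtype_mk (continuous_snd.comp continuous_subtype_val) _))
  set Φ : C((Y₁' ×ˢ Y₂' : Set (X' × X')), (Y₁ ×ˢ Y₂ : Set (X × X))) := ⟨_, hΦc⟩ with hΦ
  refine ⟨fun i => Φ ⁻¹' (U i), fun i => (hUo i).preimage Φ.continuous, ?_, ?_⟩
  · rw [← preimage_iUnion, hUc, preimage_univ]
  · intro i
    obtain ⟨s, hs⟩ := hUs i
    -- restriction of Φ to the i-th set
    set Φᵢ : C((Φ ⁻¹' (U i) : Set _), (U i : Set _)) :=
      ⟨fun q => ⟨Φ q.1, q.2⟩,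
        Continuous.subtype_mk (Φ.continuous.comp continuous_subtype_val) _⟩ with hΦᵢ
    -- first / second coordinates, as points of Y₁', Y₂'
    set c₁ : (Φ ⁻¹' (U i) : Set _) → Y₁' := fun q => ⟨q.1.1.1, q.1.2.1⟩ with hc₁
    set c₂ : (Φ ⁻¹' (U i) : Set _) → Y₂' := fun q => ⟨q.1.1.2, q.1.2.2⟩ with hc₂
    have hc₁c : Continuous c₁ :=
      Continuous.subtype_mk (continuous_fst.comp (continuous_subtype_val.comp
        continuous_subtype_val)) _
    have hc₂c : Continuous c₂ :=
      Continuous.subtype_mk (continuous_snd.comp (continuous_subtype_val.comp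
        continuous_subtype_val)) _
    -- three families of paths
    set pA : ∀ q : (Φ ⁻¹' (U i) : Set _),
        Path (ψ (u₁ (c₁ q) : X)) ((c₁ q : X')) := fun q =>
      { toFun := fun t => H₁ (t, c₁ q)
        continuous_toFun := H₁.continuous.comp
          (Continuous.prodMk continuous_id (continuous_const))
        source' := H₁.apply_zero (c₁ q)
        target' := H₁.apply_one (c₁ q) } with hpA
    set pB : ∀ q : (Φ ⁻¹' (U i) : Set _),
        Path (ψ (u₁ (c₁ q) : X)) (ψ (u₂ (c₂ q) : X)) := fun q =>
      { toFun := fun t => ψ (s (Φᵢ q) t)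
        continuous_toFun := ψ.continuous.comp (s (Φᵢ q)).continuous
        source' := congrArg ψ (hs (Φᵢ q)).1
        target' := congrArg ψ (hs (Φᵢ q)).2 } with hpB
    set pC : ∀ q : (Φ ⁻¹' (U i) : Set _),
        Path (ψ (u₂ (c₂ q) : X)) ((c₂ q : X')) := fun q =>
      { toFun := fun t => H₂ (t, c₂ q)
        continuous_toFun := H₂.continuous.comp
          (Continuous.prodMk continuous_id (continuous_const))
        source' := H₂.apply_zero (c₂ q)
        target' := H₂.apply_one (c₂ q) } with hpC
    set γ : ∀ q : (Φ ⁻¹' (U i) : Set _), Path ((c₁ q : X')) ((c₂ q : X')) :=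
      fun q => ((pA q).symm.trans (pB q)).trans (pC q) with hγ
    have hAc : Continuous ↿pA := by
      apply H₁.continuous.comp
      exact Continuous.prodMk continuous_snd (hc₁c.comp continuous_fst)
    have hBc : Continuous ↿pB := by
      apply ψ.continuous.comp
      exact (ContinuousMap.continuous_uncurry_of_continuous (s.comp Φᵢ)).comp
        (Continuous.prodMk continuous_fst continuous_snd)
    have hCc : Continuous ↿pC := by
      apply H₂.continuous.comp
      exact Continuous.prodMk continuous_snd (hc₂c.comp continuous_fst)
    have hγc : Continuous ↿γ :=
      Path.trans_continuous_family _
        (Path.trans_continuous_family _ (Path.symm_continuous_family _ hAc) _ hBc) _ hCc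
    refine ⟨⟨fun q => (γ q).toContinuousMap,
      ContinuousMap.continuous_of_continuous_uncurry _ hγc⟩, ?_⟩
    intro p
    exact ⟨(γ p).source, (γ p).target⟩

/-- If `f : X → X'` is a homotopy equivalence restricting to homotopy equivalences
`Y_j → Y_j'` (`j = 1, 2`), then `TC_X(Y₁ × Y₂) = TC_{X'}(Y₁' × Y₂')`. -/
theorem stmt8 (X X' : Type*) [TopologicalSpace X] [TopologicalSpace X']
    (Y₁ Y₂ : Set X) (Y₁' Y₂' : Set X') (f : C(X, X'))
    (hm₁ : Set.MapsTo f Y₁ Y₁') (hm₂ : Set.MapsTo f Y₂ Y₂')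
    (hf : IsHomotopyEquivalence f)
    (hf₁ : IsHomotopyEquivalence (restrictMap f hm₁))
    (hf₂ : IsHomotopyEquivalence (restrictMap f hm₂)) :
    relTC X (Y₁ ×ˢ Y₂) = relTC X' (Y₁' ×ˢ Y₂') := by
  obtain ⟨g, hgf, hfg⟩ := hf
  obtain ⟨g₁, hg₁f, hfg₁⟩ := hf₁
  obtain ⟨g₂, hg₂f, hfg₂⟩ := hf₂
  apply le_antisymm
  · -- use u_j = restrictMap f hm_j and ψ = g
    refine relTC_le_aux Y₁' Y₂' Y₁ Y₂ (restrictMap f hm₁) (restrictMap f hm₂) g ?_ ?_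
    · have : (g.comp ((inclMap Y₁').comp (restrictMap f hm₁))) =
          (g.comp f).comp (inclMap Y₁) := rfl
      rw [this]
      have := hgf.comp (ContinuousMap.Homotopic.refl (inclMap Y₁))
      simpa using this
    · have : (g.comp ((inclMap Y₂').comp (restrictMap f hm₂))) =
          (g.comp f).comp (inclMap Y₂) := rfl
      rw [this]
      have := hgf.comp (ContinuousMap.Homotopic.refl (inclMap Y₂))
      simpa using this
  · -- use u_j = g_j and ψ = f
    refine relTC_le_aux Y₁ Y₂ Y₁' Y₂' g₁ g₂ f ?_ ?_
    · have : (f.comp ((inclMap Y₁).comp g₁)) =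
          (inclMap Y₁').comp ((restrictMap f hm₁).comp g₁) := rfl
      rw [this]
      have := (ContinuousMap.Homotopic.refl (inclMap Y₁')).comp hfg₁
      simpa using this
    · have : (f.comp ((inclMap Y₂).comp g₂)) =
          (inclMap Y₂').comp ((restrictMap f hm₂).comp g₂) := rfl
      rw [this]
      have := (ContinuousMap.Homotopic.refl (inclMap Y₂')).comp hfg₂
      simpa using this
end

section
/- Let Y be a space with at least n points, Z a discrete space with n points z₁, …, z_n, and Y' = Y ∗ Z the join. Then the inclusion Cⁿ(Y) ↪ Cⁿ(Y') of ordered configuration spaces is nullhomotopic, and consequently TC_{Cⁿ(Y')}(Cⁿ(Y) × Cⁿ(Y)) = 1. -/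
open Set

/-- The ordered configuration space of `n` distinct points in `W`, as a subset of `Wⁿ`. -/
def Conf (n : ℕ) (W : Type*) : Set (Fin n → W) :=
  {w | Function.Injective w}

/-- The identifications defining the join `Y ∗ Z`. -/
def JoinRel (Y Z : Type*) :
    (Y × Z × unitInterval) → (Y × Z × unitInterval) → Prop := fun a b =>
  (a.2.2 = 0 ∧ b.2.2 = 0 ∧ a.1 = b.1) ∨ (a.2.2 = 1 ∧ b.2.2 = 1 ∧ a.2.1 = b.2.1)

/-- The join `Y ∗ Z`, a quotient of `Y × Z × [0,1]`. -/
def Join (Y Z : Type*) [TopologicalSpace Y] [TopologicalSpace Z] :=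
  Quot (JoinRel Y Z)

instance (Y Z : Type*) [TopologicalSpace Y] [TopologicalSpace Z] :
    TopologicalSpace (Join Y Z) :=
  instTopologicalSpaceQuot

/- ### Auxiliary material -/

lemma zero_ne_one_I : (0 : unitInterval) ≠ 1 :=
  fun h => zero_ne_one (α := ℝ) (congrArg Subtype.val h)

lemma join_eq_iff {Y Z : Type*} (a b : Y × Z × unitInterval) :
    Quot.mk (JoinRel Y Z) a = Quot.mk (JoinRel Y Z) b ↔ (a = b ∨ JoinRel Y Z a b) := by
  rw [Quot.eq]
  constructor
  · intro h
    induction h with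
    | rel x y h => exact Or.inr h
    | refl x => exact Or.inl rfl
    | symm x y h ih =>
        rcases ih with rfl | (⟨h1, h2, h3⟩ | ⟨h1, h2, h3⟩)
        · exact Or.inl rfl
        · exact Or.inr (Or.inl ⟨h2, h1, h3.symm⟩)
        · exact Or.inr (Or.inr ⟨h2, h1, h3.symm⟩)
    | trans x y w h1 h2 ih1 ih2 =>
        rcases ih1 with rfl | hxy
        · exact ih2
        rcases ih2 with rfl | hyw
        · exact Or.inr hxy
        rcases hxy with ⟨a1, a2, a3⟩ | ⟨a1, a2, a3⟩ <;>
          rcases hyw with ⟨b1, b2, b3⟩ | ⟨b1, b2, b3⟩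
        · exact Or.inr (Or.inl ⟨a1, b2, a3.trans b3⟩)
        · exact absurd (a2.symm.trans b1) zero_ne_one_I
        · exact absurd (b1.symm.trans a2) zero_ne_one_I
        · exact Or.inr (Or.inr ⟨a1, b2, a3.trans b3⟩)
  · rintro (rfl | h)
    · exact Relation.EqvGen.refl _
    · exact Relation.EqvGen.rel _ _ h

section Aux

variable {n : ℕ} {Y Z : Type*} [TopologicalSpace Y] [TopologicalSpace Z]

/-- The subset of configurations of the form `([y₁,z₁,0], …, [y_n,z_n,0])`. -/
def Sset (z : Fin n ≃ Z) : Set ↥(Conf n (Join Y Z)) :=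
  {c | ∀ i, ∃ y : Y, (c : Fin n → Join Y Z) i = Quot.mk (JoinRel Y Z) (y, z i, 0)}

variable (z : Fin n ≃ Z)

/-- Extraction of the `Y`-coordinates of a configuration in `Sset z`. -/
noncomputable def yext (c : ↥(Sset (Y := Y) z)) (i : Fin n) : Y := (c.2 i).choose

lemma yext_spec (c : ↥(Sset (Y := Y) z)) (i : Fin n) :
    (c.1 : Fin n → Join Y Z) i = Quot.mk (JoinRel Y Z) (yext z c i, z i, 0) :=
  (c.2 i).choose_spec

/-- The basic open sets of the join used to prove continuity of `yext`. -/
def Vset (U : Set Y) : Set (Join Y Z) :=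
  {j | ∃ p : Y × Z × unitInterval, p.1 ∈ U ∧ p.2.2 ≠ 1 ∧ j = Quot.mk (JoinRel Y Z) p}

lemma preimage_Vset (U : Set Y) :
    Quot.mk (JoinRel Y Z) ⁻¹' (Vset (Z := Z) U) = {p | p.1 ∈ U ∧ p.2.2 ≠ 1} := by
  ext p
  constructor
  · rintro ⟨q, hq1, hq2, hq3⟩
    rcases (join_eq_iff p q).1 hq3 with rfl | (⟨h1, h2, h3⟩ | ⟨h1, h2, h3⟩)
    · exact ⟨hq1, hq2⟩
    · exact ⟨h3 ▸ hq1, h1 ▸ zero_ne_one_I⟩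
    · exact absurd h2 hq2
  · intro hp
    exact ⟨p, hp.1, hp.2, rfl⟩

lemma isOpen_Vset {U : Set Y} (hU : IsOpen U) : IsOpen (Vset (Z := Z) U) := by
  refine (isQuotientMap_quot_mk (r := JoinRel Y Z)).isOpen_preimage.1 ?_
  rw [preimage_Vset]
  exact (hU.preimage continuous_fst).inter
    ((isOpen_ne (x := (1 : unitInterval))).preimage (continuous_snd.snd))

lemma continuous_yext (i : Fin n) : Continuous (fun c : ↥(Sset (Y := Y) z) => yext z c i) := by
  rw [continuous_def]
  intro U hU
  have heval : Continuous (fun c : ↥(Sset (Y := Y) z) => (c.1 : Fin n → Join Y Z) i) :=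
    (continuous_apply i).comp (continuous_subtype_val.comp continuous_subtype_val)
  have hkey : (fun c : ↥(Sset (Y := Y) z) => yext z c i) ⁻¹' U =
      (fun c : ↥(Sset (Y := Y) z) => (c.1 : Fin n → Join Y Z) i) ⁻¹' Vset (Z := Z) U := by
    ext c
    constructor
    · intro hc
      exact ⟨(yext z c i, z i, 0), hc, zero_ne_one_I, yext_spec z c i⟩
    · rintro ⟨q, hq1, hq2, hq3⟩
      have := (join_eq_iff (yext z c i, z i, 0) q).1 ((yext_spec z c i).symm.trans hq3)
      rcases this with rfl | (⟨h1, h2, h3⟩ | ⟨h1, h2, h3⟩)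
      · exact hq1
      · have h3' : yext z c i = q.1 := h3
        show yext z c i ∈ U
        rw [h3']; exact hq1
      · exact absurd h1 zero_ne_one_I
  rw [hkey]
  exact (isOpen_Vset hU).preimage heval

/-- The underlying function of the contracting homotopy. -/
noncomputable def Hfun (t : unitInterval) (c : ↥(Sset (Y := Y) z)) : Fin n → Join Y Z :=
  fun i => Quot.mk (JoinRel Y Z) (yext z c i, z i, t)

lemma Hfun_inj (t : unitInterval) (c : ↥(Sset (Y := Y) z)) :
    Function.Injective (Hfun z t c) := by
  intro i j h
  rcases (join_eq_iff _ _).1 h with heq | (⟨h1, h2, h3⟩ | ⟨h1, h2, h3⟩)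
  · exact z.injective (congrArg (fun p => p.2.1) heq)
  · have h3' : yext z c i = yext z c j := h3
    have hc : (c.1 : Fin n → Join Y Z) i = (c.1 : Fin n → Join Y Z) j := by
      rw [yext_spec z c i, yext_spec z c j, ← h3']
      exact Quot.sound (Or.inl ⟨rfl, rfl, rfl⟩)
    exact c.1.2 hc
  · exact z.injective h3

/-- The contracting homotopy, as a continuous map. -/
noncomputable def Hmap : C(unitInterval × ↥(Sset (Y := Y) z), ↥(Conf n (Join Y Z))) where
  toFun := fun p => ⟨Hfun z p.1 p.2, Hfun_inj z p.1 p.2⟩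
  continuous_toFun := by
    apply Continuous.subtype_mk
    apply continuous_pi
    intro i
    exact continuous_quot_mk.comp
      ((((continuous_yext z i).comp continuous_snd).prodMk
        (continuous_const.prodMk continuous_fst)))

lemma Hmap_zero (c : ↥(Sset (Y := Y) z)) : Hmap z (0, c) = c.1 :=
  Subtype.ext (funext fun i => (yext_spec z c i).symm)

lemma Hmap_one (c c' : ↥(Sset (Y := Y) z)) : Hmap z (1, c) = Hmap z (1, c') :=
  Subtype.ext (funext fun i => Quot.sound (Or.inr ⟨rfl, rfl, rfl⟩))

end Aux

/-- Let `Y` have at least `n` points, `Z` a discrete space with `n` points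
`z₁, …, z_n`, and `Y' = Y ∗ Z`. Identifying `Cⁿ(Y)` with the subspace of
`Cⁿ(Y')` of configurations of the form `([y₁,z₁,0], …, [y_n,z_n,0])`, the
inclusion `Cⁿ(Y) ↪ Cⁿ(Y')` is nullhomotopic, and consequently
`TC_{Cⁿ(Y')}(Cⁿ(Y) × Cⁿ(Y)) = 1`. -/
theorem stmt12 (n : ℕ) (Y Z : Type*) [TopologicalSpace Y]
    [TopologicalSpace Z] [DiscreteTopology Z] (z : Fin n ≃ Z)
    (hY : ∃ f : Fin n → Y, Function.Injective f)
    (S : Set ↥(Conf n (Join Y Z)))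
    (hS : S = {c | ∀ i, ∃ y : Y,
      (c : Fin n → Join Y Z) i = Quot.mk (JoinRel Y Z) (y, z i, 0)}) :
    ContinuousMap.Nullhomotopic
      (⟨Subtype.val, continuous_subtype_val⟩ : C(S, ↥(Conf n (Join Y Z)))) ∧
    relTC ↥(Conf n (Join Y Z)) (S ×ˢ S) = 1 := by
  have hS' : S = Sset z := by
    ext c
    constructor
    · intro hc
      have h2 : (c : Fin n → Join Y Z) ∈ Subtype.val '' S := Set.mem_image_of_mem _ hc
      rw [hS] at h2
      exact h2
    · intro hc
      have h2 : (c : Fin n → Join Y Z) ∈ Subtype.val '' S := by rw [hS]; exact hc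
      obtain ⟨d, hd, hdc⟩ := h2
      rwa [Subtype.coe_injective hdc] at hd
  subst hS'
  obtain ⟨f, hf⟩ := hY
  -- a basepoint configuration in `Sset z`
  have hc0inj : Function.Injective fun i => Quot.mk (JoinRel Y Z) (f i, z i, 0) := by
    intro i j h
    rcases (join_eq_iff _ _).1 h with heq | (⟨h1, h2, h3⟩ | ⟨h1, h2, h3⟩)
    · exact z.injective (congrArg (fun p => p.2.1) heq)
    · exact hf h3
    · exact absurd h1 zero_ne_one_I
  set c0 : ↥(Conf n (Join Y Z)) := ⟨fun i => Quot.mk (JoinRel Y Z) (f i, z i, 0), hc0inj⟩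
    with hc0
  have hc0S : c0 ∈ Sset z := fun i => ⟨f i, rfl⟩
  have hSne : (Sset (Y := Y) z).Nonempty := ⟨c0, hc0S⟩
  -- the contraction point
  set cend : ↥(Conf n (Join Y Z)) := Hmap z (1, ⟨c0, hc0S⟩) with hcend
  constructor
  · -- nullhomotopy of the inclusion
    refine ⟨cend, ⟨?_⟩⟩
    exact
      { toContinuousMap := Hmap z
        map_zero_left := fun c => Hmap_zero z c
        map_one_left := fun c => Hmap_one z c ⟨c0, hc0S⟩ }
  · -- relative topological complexity
    apply le_antisymm
    · -- relTC ≤ 1 : one open set, namely everything, with a section built from the homotopy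
      apply sInf_le
      refine ⟨1, by norm_num, fun _ => univ, fun _ => isOpen_univ, iUnion_const _, fun i => ?_⟩
      -- build the global section
      set A : Set (↥(Conf n (Join Y Z)) × ↥(Conf n (Join Y Z))) := Sset z ×ˢ Sset z with hA
      have ha1 : Continuous fun q : ↥(univ : Set ↥A) => (⟨q.1.1.1, q.1.2.1⟩ : ↥(Sset z)) :=
        Continuous.subtype_mk
          (continuous_fst.comp (continuous_subtype_val.comp continuous_subtype_val)) _
      have ha2 : Continuous fun q : ↥(univ : Set ↥A) => (⟨q.1.1.2, q.1.2.2⟩ : ↥(Sset z)) :=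
        Continuous.subtype_mk
          (continuous_snd.comp (continuous_subtype_val.comp continuous_subtype_val)) _
      set pr : ℝ → unitInterval := fun r => Set.projIcc 0 1 zero_le_one r with hpr
      have hprc : Continuous pr := continuous_projIcc
      refine ⟨ContinuousMap.curry ⟨fun q =>
        if ((q.2 : ℝ) ≤ 1 / 2) then Hmap z (pr (2 * (q.2 : ℝ)), ⟨q.1.1.1.1, q.1.1.2.1⟩)
        else Hmap z (pr (2 - 2 * (q.2 : ℝ)), ⟨q.1.1.1.2, q.1.1.2.2⟩), ?_⟩, ?_⟩
      · apply Continuous.if_le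
        · exact (Hmap z).continuous.comp
            ((hprc.comp (continuous_const.mul
              (continuous_subtype_val.comp continuous_snd))).prodMk
              (ha1.comp continuous_fst))
        · exact (Hmap z).continuous.comp
            ((hprc.comp (continuous_const.sub (continuous_const.mul
              (continuous_subtype_val.comp continuous_snd)))).prodMk
              (ha2.comp continuous_fst))
        · exact continuous_subtype_val.comp continuous_snd
        · exact continuous_const
        · intro q hq
          have e1 : pr (2 * (q.2 : ℝ)) = 1 :=
            Subtype.ext (show max (0:ℝ) (min 1 (2 * (q.2:ℝ))) = 1 by rw [hq]; norm_num)
          have e2 : pr (2 - 2 * (q.2 : ℝ)) = 1 :=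
            Subtype.ext (show max (0:ℝ) (min 1 (2 - 2 * (q.2:ℝ))) = 1 by rw [hq]; norm_num)
          rw [e1, e2]
          exact Hmap_one z _ _
      · intro p
        constructor
        · show (if (((0 : unitInterval) : ℝ) ≤ 1 / 2) then _ else _) = _
          rw [if_pos (show ((0 : unitInterval) : ℝ) ≤ 1 / 2 by
            rw [show ((0 : unitInterval) : ℝ) = 0 from rfl]; norm_num)]
          have h0 : pr (2 * ((0 : unitInterval) : ℝ)) = 0 :=
            Subtype.ext (show max (0:ℝ) (min 1 (2 * ((0 : unitInterval):ℝ))) = 0 by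
              rw [show ((0 : unitInterval) : ℝ) = 0 from rfl]; norm_num)
          rw [h0, Hmap_zero]
        · show (if (((1 : unitInterval) : ℝ) ≤ 1 / 2) then _ else _) = _
          rw [if_neg (show ¬ ((1 : unitInterval) : ℝ) ≤ 1 / 2 by
            rw [show ((1 : unitInterval) : ℝ) = 1 from rfl]; norm_num)]
          have h0 : pr (2 - 2 * ((1 : unitInterval) : ℝ)) = 0 :=
            Subtype.ext (show max (0:ℝ) (min 1 (2 - 2 * ((1 : unitInterval):ℝ))) = 0 by
              rw [show ((1 : unitInterval) : ℝ) = 1 from rfl]; norm_num)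
          rw [h0, Hmap_zero]
    · -- 1 ≤ relTC : the empty cover cannot cover a nonempty space
      apply le_sInf
      rintro N ⟨k, rfl, U, -, hcov, -⟩
      have hk : k ≠ 0 := by
        rintro rfl
        have haA : (⟨(c0, c0), hc0S, hc0S⟩ : ↥(Sset z ×ˢ Sset z)) ∈ ⋃ i, U i := by
          rw [hcov]; trivial
        obtain ⟨i, -⟩ := mem_iUnion.1 haA
        exact i.elim0
      exact_mod_cast Nat.one_le_iff_ne_zero.2 hk
end

section
/- For any space Y with at least n points, TC_{Cⁿ(Y×I)}(Cⁿ(Y) × Cⁿ(Y)) ≤ TC(Yⁿ). -/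
open Set

/-- The subspace of `Cⁿ(Y × I)` of configurations lying in `Y × {0}`,
i.e. the copy of `Cⁿ(Y)` inside `Cⁿ(Y × I)`. -/
def baseConf (n : ℕ) (Y : Type*) [TopologicalSpace Y] :
    Set ↥(Conf n (Y × unitInterval)) :=
  {c | ∀ i, ((c : Fin n → Y × unitInterval) i).2 = 0}

namespace Stmt15Aux

/-- vertical scaling factor: 0 at t=0,1 and 1 on [1/3,2/3] -/
noncomputable def φ (t : unitInterval) : ℝ := min 1 (min (3 * t.1) (3 - 3 * t.1))

lemma φ_nonneg (t : unitInterval) : 0 ≤ φ t := by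
  have h0 := t.2.1; have h1 := t.2.2
  simp only [φ, le_min_iff]; constructor; · norm_num
  constructor <;> nlinarith

lemma φ_le_one (t : unitInterval) : φ t ≤ 1 := min_le_left _ _

lemma φ_cont : Continuous φ := by
  apply Continuous.min continuous_const
  apply Continuous.min
  · exact (continuous_const.mul continuous_subtype_val)
  · exact (continuous_const.sub (continuous_const.mul continuous_subtype_val))

lemma φ_zero : φ 0 = 0 := by simp [φ]
lemma φ_one : φ 1 = 0 := by norm_num [φ]

lemma φ_eq_zero {t : unitInterval} (h : φ t = 0) : t = 0 ∨ t = 1 := by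
  by_contra hc
  push_neg at hc
  obtain ⟨h0, h1⟩ := hc
  have ht0 : 0 < t.1 := lt_of_le_of_ne t.2.1 (fun he => h0 (Subtype.ext he.symm))
  have ht1 : t.1 < 1 := lt_of_le_of_ne t.2.2 (fun he => h1 (Subtype.ext he))
  have : 0 < φ t := by
    simp only [φ, lt_min_iff]
    refine ⟨one_pos, ?_, ?_⟩ <;> nlinarith
  linarith

/-- horizontal time reparametrization: 0 on [0,1/3], 1 on [2/3,1] -/
noncomputable def mid (t : unitInterval) : unitInterval :=
  ⟨max 0 (min 1 (3 * t.1 - 1)), le_max_left _ _,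
    max_le zero_le_one (min_le_left _ _)⟩

lemma mid_cont : Continuous mid := by
  apply Continuous.subtype_mk
  exact continuous_const.max (continuous_const.min
    ((continuous_const.mul continuous_subtype_val).sub continuous_const))

lemma mid_zero : mid 0 = 0 := by
  apply Subtype.ext; simp [mid]

lemma mid_one : mid 1 = 1 := by
  apply Subtype.ext; simp [mid]; norm_num

/-- heights -/
noncomputable def hgt (n : ℕ) (j : Fin n) : ℝ := (j.1 + 1) / (n + 1)

lemma hgt_nonneg (n : ℕ) (j : Fin n) : 0 ≤ hgt n j := by
  unfold hgt; positivity

lemma hgt_le_one (n : ℕ) (j : Fin n) : hgt n j ≤ 1 := by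
  unfold hgt
  rw [div_le_one (by positivity)]
  have h := j.2
  have h2 : (j.1 : ℝ) < n := by exact_mod_cast h
  linarith

lemma hgt_inj (n : ℕ) : Function.Injective (hgt n) := by
  intro i j h
  unfold hgt at h
  have hn : ((n : ℝ) + 1) ≠ 0 := by positivity
  field_simp at h
  exact Fin.ext (Nat.cast_injective (add_right_cancel h))

/-- the second coordinate of the lifted flow -/
noncomputable def ht (n : ℕ) (t : unitInterval) (j : Fin n) : unitInterval :=
  ⟨φ t * hgt n j, mul_nonneg (φ_nonneg t) (hgt_nonneg n j),
    mul_le_one₀ (φ_le_one t) (hgt_nonneg n j) (hgt_le_one n j)⟩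

lemma ht_cont (n : ℕ) (j : Fin n) : Continuous fun t => ht n t j := by
  exact Continuous.subtype_mk (φ_cont.mul continuous_const) _

lemma ht_zero (n : ℕ) (j : Fin n) : ht n 0 j = 0 := by
  apply Subtype.ext; simp [ht, φ_zero]

lemma ht_one (n : ℕ) (j : Fin n) : ht n 1 j = 0 := by
  apply Subtype.ext; simp [ht, φ_one]

/-- the lifted flow -/
noncomputable def flow {n : ℕ} {Y : Type*} (γ : unitInterval → Fin n → Y)
    (t : unitInterval) : Fin n → Y × unitInterval :=
  fun j => (γ (mid t) j, ht n t j)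

lemma flow_inj {n : ℕ} {Y : Type*} [TopologicalSpace Y]
    (γ : unitInterval → Fin n → Y)
    (a b : ↥(Conf n (Y × unitInterval)))
    (ha : a ∈ baseConf n Y) (hb : b ∈ baseConf n Y)
    (h0 : γ 0 = fun j => ((a : Fin n → Y × unitInterval) j).1)
    (h1 : γ 1 = fun j => ((b : Fin n → Y × unitInterval) j).1)
    (t : unitInterval) : Function.Injective (flow γ t) := by
  intro j k h
  simp only [flow, Prod.mk.injEq] at h
  obtain ⟨hfst, hsnd⟩ := h
  by_cases hφ : φ t = 0
  · rcases φ_eq_zero hφ with rfl | rfl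
    · rw [mid_zero, h0] at hfst
      apply a.2
      ext
      · exact hfst
      · rw [ha j, ha k]
    · rw [mid_one, h1] at hfst
      apply b.2
      ext
      · exact hfst
      · rw [hb j, hb k]
  · apply hgt_inj n
    have : φ t * hgt n j = φ t * hgt n k := congrArg Subtype.val hsnd
    exact mul_left_cancel₀ hφ this

end Stmt15Aux

/-- For a space `Y` with at least `n` points,
`TC_{Cⁿ(Y×I)}(Cⁿ(Y) × Cⁿ(Y)) ≤ TC(Yⁿ)`. -/
theorem stmt15 (n : ℕ) (Y : Type*) [TopologicalSpace Y]
    (hY : ∃ f : Fin n → Y, Function.Injective f) :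
    relTC ↥(Conf n (Y × unitInterval)) (baseConf n Y ×ˢ baseConf n Y) ≤
      relTC (Fin n → Y) univ := by
  classical
  apply le_sInf
  rintro N ⟨k, rfl, U, hUo, hUc, hUs⟩
  apply sInf_le
  refine ⟨k, rfl, ?_⟩
  set X := ↥(Conf n (Y × unitInterval)) with hX
  set A := baseConf n Y ×ˢ baseConf n Y with hA
  -- projection to the pair of configurations of first coordinates
  let proj : ↥A → (Fin n → Y) × (Fin n → Y) := fun p =>
    (fun j => ((p.1.1 : Fin n → Y × unitInterval) j).1,
     fun j => ((p.1.2 : Fin n → Y × unitInterval) j).1)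
  have hproj : Continuous proj := by
    apply Continuous.prodMk
    · exact continuous_pi fun j => continuous_fst.comp ((continuous_apply j).comp
        (continuous_subtype_val.comp (continuous_fst.comp continuous_subtype_val)))
    · exact continuous_pi fun j => continuous_fst.comp ((continuous_apply j).comp
        (continuous_subtype_val.comp (continuous_snd.comp continuous_subtype_val)))
  let e : ((Fin n → Y) × (Fin n → Y)) → ↥(univ : Set ((Fin n → Y) × (Fin n → Y))) :=
    fun q => ⟨q, mem_univ q⟩
  have he : Continuous e := Continuous.subtype_mk continuous_id _
  let V : Fin k → Set ↥A := fun i => (fun p => e (proj p)) ⁻¹' (U i)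
  refine ⟨V, ?_, ?_, ?_⟩
  · exact fun i => (hUo i).preimage (he.comp hproj)
  · apply eq_univ_of_forall
    intro p
    have : e (proj p) ∈ ⋃ i, U i := hUc ▸ mem_univ _
    obtain ⟨i, hi⟩ := mem_iUnion.mp this
    exact mem_iUnion.mpr ⟨i, hi⟩
  · intro i
    obtain ⟨s, hs⟩ := hUs i
    -- γ p : the path in Yⁿ associated to p
    let γ : ↥(V i) → C(unitInterval, Fin n → Y) := fun p => s ⟨e (proj p.1), p.2⟩
    have hγ : Continuous γ :=
      s.continuous.comp (Continuous.subtype_mk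
        ((he.comp hproj).comp continuous_subtype_val) _)
    have hγ0 : ∀ p : ↥(V i), γ p 0 =
        fun j => ((p.1.1.1 : Fin n → Y × unitInterval) j).1 :=
      fun p => (hs ⟨e (proj p.1), p.2⟩).1
    have hγ1 : ∀ p : ↥(V i), γ p 1 =
        fun j => ((p.1.1.2 : Fin n → Y × unitInterval) j).1 :=
      fun p => (hs ⟨e (proj p.1), p.2⟩).2
    have hmemA : ∀ p : ↥(V i), p.1.1.1 ∈ baseConf n Y ∧ p.1.1.2 ∈ baseConf n Y :=
      fun p => p.1.2
    -- the lifted flow, as a jointly continuous map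
    let G : C(↥(V i) × unitInterval, X) :=
      ⟨fun q => ⟨Stmt15Aux.flow (γ q.1) q.2,
          Stmt15Aux.flow_inj (γ q.1) q.1.1.1.1 q.1.1.1.2
            (hmemA q.1).1 (hmemA q.1).2 (hγ0 q.1) (hγ1 q.1) q.2⟩, ?_⟩
    · refine ⟨ContinuousMap.curry G, ?_⟩
      intro p
      constructor
      · apply Subtype.ext
        funext j
        show Stmt15Aux.flow (γ p) 0 j = (p.1.1.1 : Fin n → Y × unitInterval) j
        unfold Stmt15Aux.flow
        rw [Stmt15Aux.mid_zero, hγ0 p, Stmt15Aux.ht_zero]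
        exact Prod.ext rfl ((hmemA p).1 j).symm
      · apply Subtype.ext
        funext j
        show Stmt15Aux.flow (γ p) 1 j = (p.1.1.2 : Fin n → Y × unitInterval) j
        unfold Stmt15Aux.flow
        rw [Stmt15Aux.mid_one, hγ1 p, Stmt15Aux.ht_one]
        exact Prod.ext rfl ((hmemA p).2 j).symm
    · -- continuity of G
      apply Continuous.subtype_mk
      apply continuous_pi
      intro j
      apply Continuous.prodMk
      · exact (continuous_apply j).comp
          (ContinuousEval.continuous_eval.comp
            ((hγ.comp continuous_fst).prodMk
              (Stmt15Aux.mid_cont.comp continuous_snd)))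
      · exact (Stmt15Aux.ht_cont n j).comp continuous_snd
end

section
/- If Y is a contractible space with at least n points, then TC_{Cⁿ(Y×I)}(Cⁿ(Y) × Cⁿ(Y)) = 1. -/
open Set

/-- If `Y` is a contractible space with at least `n` points, then
`TC_{Cⁿ(Y×I)}(Cⁿ(Y) × Cⁿ(Y)) = 1`. -/
theorem stmt16 (n : ℕ) (Y : Type*) [TopologicalSpace Y] [ContractibleSpace Y]
    (hY : ∃ f : Fin n → Y, Function.Injective f) :
    relTC ↥(Conf n (Y × unitInterval)) (baseConf n Y ×ˢ baseConf n Y) = 1 := by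
  classical
  obtain ⟨f, hf⟩ := hY
  set X := ↥(Conf n (Y × unitInterval)) with hXdef
  -- A nonempty element
  have hc0 : (fun i => (f i, (0 : unitInterval))) ∈ Conf n (Y × unitInterval) := by
    intro i j hij
    exact hf (congrArg Prod.fst hij)
  have hAne : ((⟨_, hc0⟩, ⟨_, hc0⟩) : X × X) ∈ baseConf n Y ×ˢ baseConf n Y :=
    ⟨fun i => rfl, fun i => rfl⟩
  -- contraction of Y
  obtain ⟨y₀, hy₀⟩ := id_nullhomotopic Y
  obtain ⟨F⟩ := hy₀
  set r : ℝ → unitInterval := Set.projIcc 0 1 zero_le_one with hrdef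
  -- the horizontal motion
  set g : ℝ × (Y × Y) → Y := fun q =>
    if q.1 ≤ 1/2 then F (r (2 * q.1), q.2.1) else F (r (2 - 2 * q.1), q.2.2) with hgdef
  have hr1 : r 1 = 1 := by
    apply Subtype.ext
    rw [hrdef, Set.coe_projIcc]
    norm_num
  have hr0 : r 0 = 0 := by
    apply Subtype.ext
    rw [hrdef, Set.coe_projIcc]
    norm_num
  have hgcont : Continuous g := by
    apply Continuous.if_le
    · exact F.continuous.comp
        ((continuous_projIcc.comp (continuous_const.mul continuous_fst)).prodMk
          continuous_snd.fst)
    · exact F.continuous.comp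
        ((continuous_projIcc.comp (continuous_const.sub (continuous_const.mul
          continuous_fst))).prodMk continuous_snd.snd)
    · exact continuous_fst
    · exact continuous_const
    · intro x hx
      have h1 : 2 * x.1 = 1 := by rw [hx]; norm_num
      have h2 : 2 - 2 * x.1 = 1 := by rw [hx]; norm_num
      rw [h2, h1, hr1, F.apply_one, F.apply_one]
      rfl
  have hg0 : ∀ a b : Y, g (0, a, b) = a := by
    intro a b
    have : (0:ℝ) ≤ 1/2 := by norm_num
    simp only [hgdef, if_pos this, mul_zero, hr0, F.apply_zero]
    rfl
  have hg1 : ∀ a b : Y, g (1, a, b) = b := by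
    intro a b
    have h : ¬ ((1:ℝ) ≤ 1/2) := by norm_num
    have h2 : 2 - 2 * (1:ℝ) = 0 := by norm_num
    simp only [hgdef, if_neg h, h2, hr0, F.apply_zero]
    rfl
  -- the heights
  set τ : ℝ → Fin n → unitInterval := fun t i =>
    Set.projIcc 0 1 zero_le_one ((((i : ℕ) : ℝ) + 1) / (n + 1) * (4 * t * (1 - t))) with hτdef
  have hτ0 : ∀ i, τ 0 i = 0 := by
    intro i
    apply Subtype.ext
    rw [hτdef]
    simp only [Set.coe_projIcc]
    norm_num
  have hτ1 : ∀ i, τ 1 i = 0 := by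
    intro i
    apply Subtype.ext
    rw [hτdef]
    simp only [Set.coe_projIcc]
    norm_num
  have hτinj : ∀ t : ℝ, 0 < t → t < 1 → Function.Injective (τ t) := by
    intro t ht0 ht1 i j hij
    have hs : 0 < 4 * t * (1 - t) := by nlinarith
    have hs1 : 4 * t * (1 - t) ≤ 1 := by nlinarith [sq_nonneg (2*t - 1)]
    have hnpos : (0:ℝ) < (n:ℝ) + 1 := by positivity
    have hb : ∀ m : Fin n, (((m : ℕ) : ℝ) + 1) / (n + 1) * (4 * t * (1 - t)) ∈ Icc (0:ℝ) 1 := by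
      intro m
      constructor
      · positivity
      · have hm1 : ((m : ℕ) : ℝ) + 1 ≤ (n:ℝ) + 1 := by
          have := m.isLt
          have : ((m : ℕ) : ℝ) ≤ (n:ℝ) := by exact_mod_cast Nat.le_of_lt_succ (Nat.lt_succ_of_lt this)
          linarith
        have hdiv : (((m : ℕ) : ℝ) + 1) / (n + 1) ≤ 1 := by
          rw [div_le_one hnpos]; exact hm1
        have hdiv0 : 0 ≤ (((m : ℕ) : ℝ) + 1) / (n + 1) := by positivity
        nlinarith
    have hco : ((((i : ℕ) : ℝ) + 1) / (n + 1) * (4 * t * (1 - t)))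
        = ((((j : ℕ) : ℝ) + 1) / (n + 1) * (4 * t * (1 - t))) := by
      have hEq : ((τ t i : ℝ)) = ((τ t j : ℝ)) := by rw [hij]
      rw [hτdef] at hEq
      simp only [Set.coe_projIcc] at hEq
      rwa [min_eq_right (hb i).2, max_eq_right (hb i).1,
        min_eq_right (hb j).2, max_eq_right (hb j).1] at hEq
    have h2 : (((i : ℕ) : ℝ) + 1) / (n + 1) = (((j : ℕ) : ℝ) + 1) / (n + 1) :=
      mul_right_cancel₀ hs.ne' hco
    have hnn : ((n:ℝ) + 1) ≠ 0 := hnpos.ne'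
    rw [div_eq_div_iff hnn hnn] at h2
    have h2' := mul_right_cancel₀ hnn h2
    have h3 : ((i : ℕ) : ℝ) = ((j : ℕ) : ℝ) := by linarith
    exact Fin.ext (by exact_mod_cast h3)
  -- the section map
  set A : Set (X × X) := baseConf n Y ×ˢ baseConf n Y with hAdef
  set D := ↥(univ : Set ↥A) with hDdef
  set ψ : D × unitInterval → (Fin n → Y × unitInterval) := fun q i =>
    (g ((q.2 : ℝ), ((q.1.1.1.1 : Fin n → Y × unitInterval) i).1,
       ((q.1.1.1.2 : Fin n → Y × unitInterval) i).1),
     τ (q.2 : ℝ) i) with hψdef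
  have keyψ0 : ∀ p : D, ψ (p, 0) = (p.1.1.1 : Fin n → Y × unitInterval) := by
    intro p
    funext i
    have hz : (((0 : unitInterval) : ℝ)) = 0 := rfl
    have hb : ((p.1.1.1 : Fin n → Y × unitInterval) i).2 = 0 := p.1.2.1 i
    apply Prod.ext
    · exact hg0 _ _
    · show τ ((0 : unitInterval) : ℝ) i = _
      rw [hz, hτ0 i, hb]
  have keyψ1 : ∀ p : D, ψ (p, 1) = (p.1.1.2 : Fin n → Y × unitInterval) := by
    intro p
    funext i
    have hz : (((1 : unitInterval) : ℝ)) = 1 := rfl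
    have hb : ((p.1.1.2 : Fin n → Y × unitInterval) i).2 = 0 := p.1.2.2 i
    apply Prod.ext
    · exact hg1 _ _
    · show τ ((1 : unitInterval) : ℝ) i = _
      rw [hz, hτ1 i, hb]
  have hψmem : ∀ q : D × unitInterval, ψ q ∈ Conf n (Y × unitInterval) := by
    rintro ⟨p, t⟩ i j hij
    rcases eq_or_lt_of_le t.2.1 with h0 | h0
    · have ht : t = 0 := Subtype.ext h0.symm
      subst ht
      rw [keyψ0 p] at hij
      exact p.1.1.1.2 hij
    rcases eq_or_lt_of_le t.2.2 with h1 | h1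
    · have ht : t = 1 := Subtype.ext h1
      subst ht
      rw [keyψ1 p] at hij
      exact p.1.1.2.2 hij
    · exact hτinj (t : ℝ) h0 h1 (congrArg Prod.snd hij)
  have hψcont : Continuous ψ := by
    apply continuous_pi
    intro i
    have hc1 : Continuous fun q : D × unitInterval =>
        ((q.1.1.1.1 : Fin n → Y × unitInterval) i).1 :=
      ((continuous_apply i).comp
        continuous_fst.subtype_val.subtype_val.fst.subtype_val).fst
    have hc2 : Continuous fun q : D × unitInterval =>
        ((q.1.1.1.2 : Fin n → Y × unitInterval) i).1 :=
      ((continuous_apply i).comp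
        continuous_fst.subtype_val.subtype_val.snd.subtype_val).fst
    have hct : Continuous fun q : D × unitInterval => ((q.2 : ℝ)) :=
      continuous_snd.subtype_val
    have hτc : Continuous fun q : D × unitInterval =>
        τ ((q.2 : ℝ)) i :=
      continuous_projIcc.comp
        (show Continuous fun q : D × unitInterval =>
          (((i : ℕ) : ℝ) + 1) / (n + 1) * (4 * (q.2 : ℝ) * (1 - (q.2 : ℝ))) by fun_prop)
    exact (hgcont.comp (hct.prodMk (hc1.prodMk hc2))).prodMk hτc
  set Ψ : C(D × unitInterval, X) := ⟨fun q => ⟨ψ q, hψmem q⟩, hψcont.subtype_mk _⟩ with hΨdef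
  -- Now compute relTC
  apply le_antisymm
  · apply sInf_le
    refine ⟨1, Nat.cast_one.symm, fun _ => univ, fun _ => isOpen_univ, by exact iUnion_const _, ?_⟩
    intro i
    refine ⟨Ψ.curry, ?_⟩
    intro p
    constructor
    · exact Subtype.ext (keyψ0 p)
    · exact Subtype.ext (keyψ1 p)
  · apply le_sInf
    rintro N ⟨k, rfl, U, hU, hcover, hsec⟩
    rcases Nat.eq_zero_or_pos k with hk | hk
    · exfalso
      subst hk
      have : (⋃ i : Fin 0, U i) = ∅ := iUnion_of_empty U
      rw [this] at hcover
      have : (⟨(⟨_, hc0⟩, ⟨_, hc0⟩), hAne⟩ : ↥A) ∈ (∅ : Set ↥A) := by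
        rw [hcover]; trivial
      exact this
    · exact_mod_cast hk
end

section
/- For X = ℝ and n = 2, TC_{ℝ²}(C²(ℝ) × C²(ℝ)) = 1: the map σ sending ((x₁,x₂),(y₁,y₂)) with x₁ < x₂ to the coordinatewise path through 0 and with x₁ > x₂ to the coordinatewise path through 1 is a continuous global section of the endpoint fibration taking values in paths through ℝ² that stay in C²(ℝ) at their endpoints. -/
open Set

/-- The ordered configuration space `C²(ℝ)` of two distinct points in `ℝ`. -/
def conf2 : Set (ℝ × ℝ) := {p | p.1 ≠ p.2}

/-- The path `σ_z(x,y)` that moves linearly from `x` to `z` on `[0,1/2]`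
and from `z` to `y` on `[1/2,1]`. -/
noncomputable def sigPath (z x y : ℝ) (t : unitInterval) : ℝ :=
  if (t : ℝ) ≤ 1 / 2 then (1 - 2 * (t : ℝ)) * x + 2 * (t : ℝ) * z
  else (2 * (t : ℝ) - 1) * y + (2 - 2 * (t : ℝ)) * z

lemma sigPath_zero (z x y : ℝ) : sigPath z x y 0 = x := by
  norm_num [sigPath]

lemma sigPath_one (z x y : ℝ) : sigPath z x y 1 = y := by
  norm_num [sigPath]

lemma continuous_sigPath (z : ℝ) :
    Continuous (fun q : (ℝ × ℝ) × unitInterval => sigPath z q.1.1 q.1.2 q.2) := by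
  unfold sigPath
  apply Continuous.if_le
  · fun_prop
  · fun_prop
  · fun_prop
  · fun_prop
  · intro q h; rw [h]; ring

noncomputable def Gfun : (↥conf2 × ↥conf2) × unitInterval → ℝ × ℝ :=
  fun q =>
    if (q.1.1 : ℝ × ℝ).1 < (q.1.1 : ℝ × ℝ).2 then
      (sigPath 0 (q.1.1 : ℝ × ℝ).1 (q.1.2 : ℝ × ℝ).1 q.2,
       sigPath 0 (q.1.1 : ℝ × ℝ).2 (q.1.2 : ℝ × ℝ).2 q.2)
    else
      (sigPath 1 (q.1.1 : ℝ × ℝ).1 (q.1.2 : ℝ × ℝ).1 q.2,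
       sigPath 1 (q.1.1 : ℝ × ℝ).2 (q.1.2 : ℝ × ℝ).2 q.2)

lemma continuous_Gfun : Continuous Gfun := by
  have hS : IsClopen {q : (↥conf2 × ↥conf2) × unitInterval |
      (q.1.1 : ℝ × ℝ).1 < (q.1.1 : ℝ × ℝ).2} := by
    constructor
    · rw [← isOpen_compl_iff]
      have he : {q : (↥conf2 × ↥conf2) × unitInterval |
          (q.1.1 : ℝ × ℝ).1 < (q.1.1 : ℝ × ℝ).2}ᶜ =
          {q : (↥conf2 × ↥conf2) × unitInterval |
          (q.1.1 : ℝ × ℝ).2 < (q.1.1 : ℝ × ℝ).1} := by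
        ext q
        simp only [mem_compl_iff, mem_setOf_eq, not_lt]
        constructor
        · intro h
          exact lt_of_le_of_ne h (fun hc => q.1.1.2 hc.symm)
        · exact le_of_lt
      rw [he]
      exact isOpen_lt (by fun_prop) (by fun_prop)
    · exact isOpen_lt (by fun_prop) (by fun_prop)
  have hbranch : ∀ z : ℝ, Continuous (fun q : (↥conf2 × ↥conf2) × unitInterval =>
      (sigPath z (q.1.1 : ℝ × ℝ).1 (q.1.2 : ℝ × ℝ).1 q.2,
       sigPath z (q.1.1 : ℝ × ℝ).2 (q.1.2 : ℝ × ℝ).2 q.2)) := by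
    intro z
    have h1 : Continuous (fun q : (↥conf2 × ↥conf2) × unitInterval =>
        ((((q.1.1 : ℝ × ℝ).1), ((q.1.2 : ℝ × ℝ).1)), q.2)) := by fun_prop
    have h2 : Continuous (fun q : (↥conf2 × ↥conf2) × unitInterval =>
        ((((q.1.1 : ℝ × ℝ).2), ((q.1.2 : ℝ × ℝ).2)), q.2)) := by fun_prop
    exact ((continuous_sigPath z).comp h1).prodMk ((continuous_sigPath z).comp h2)
  exact Continuous.if (by rw [hS.frontier_eq]; simp) (hbranch 0) (hbranch 1)

noncomputable def sMap : C(↥conf2 × ↥conf2, C(unitInterval, ℝ × ℝ)) :=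
  ContinuousMap.curry ⟨Gfun, continuous_Gfun⟩

lemma sMap_endpoints (x y : ↥conf2) :
    sMap (x, y) 0 = (x : ℝ × ℝ) ∧ sMap (x, y) 1 = (y : ℝ × ℝ) := by
  constructor <;>
  · show Gfun ((x, y), _) = _
    unfold Gfun
    split <;> simp [sigPath_zero, sigPath_one]

/-- `TC_{ℝ²}(C²(ℝ) × C²(ℝ)) = 1`: the map `σ` sending `((x₁,x₂),(y₁,y₂))` with
`x₁ < x₂` to the coordinatewise path through `0` and with `x₁ > x₂` to the
coordinatewise path through `1` is a continuous global section of the endpoint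
fibration. -/
theorem stmt17 :
    (∃ s : C(↥conf2 × ↥conf2, C(unitInterval, ℝ × ℝ)),
      (∀ (x y : ↥conf2) (t : unitInterval),
        s (x, y) t =
          if (x : ℝ × ℝ).1 < (x : ℝ × ℝ).2 then
            (sigPath 0 (x : ℝ × ℝ).1 (y : ℝ × ℝ).1 t,
             sigPath 0 (x : ℝ × ℝ).2 (y : ℝ × ℝ).2 t)
          else
            (sigPath 1 (x : ℝ × ℝ).1 (y : ℝ × ℝ).1 t,
             sigPath 1 (x : ℝ × ℝ).2 (y : ℝ × ℝ).2 t)) ∧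
      (∀ x y : ↥conf2, s (x, y) 0 = (x : ℝ × ℝ) ∧ s (x, y) 1 = (y : ℝ × ℝ))) ∧
    relTC (ℝ × ℝ) (conf2 ×ˢ conf2) = 1 := by
  constructor
  · exact ⟨sMap, fun x y t => rfl, sMap_endpoints⟩
  · -- relTC = 1
    have hmem : (1 : ℕ∞) ∈ {N : ℕ∞ | ∃ k : ℕ, N = k ∧
        ∃ U : Fin k → Set ↥(conf2 ×ˢ conf2),
        (∀ i, IsOpen (U i)) ∧ (⋃ i, U i) = univ ∧
        ∀ i, ∃ s : C(U i, C(unitInterval, ℝ × ℝ)),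
          ∀ p : U i, s p 0 = (p.1.1 : (ℝ × ℝ) × (ℝ × ℝ)).1 ∧
            s p 1 = (p.1.1 : (ℝ × ℝ) × (ℝ × ℝ)).2} := by
      refine ⟨1, rfl, fun _ => univ, fun _ => isOpen_univ, iUnion_const _, fun i => ?_⟩
      have hφ : Continuous (fun p : ↥(univ : Set ↥(conf2 ×ˢ conf2)) =>
          ((⟨(p.1.1 : (ℝ × ℝ) × (ℝ × ℝ)).1, p.1.2.1⟩ : ↥conf2),
           (⟨(p.1.1 : (ℝ × ℝ) × (ℝ × ℝ)).2, p.1.2.2⟩ : ↥conf2))) := by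
        fun_prop
      refine ⟨sMap.comp ⟨_, hφ⟩, fun p => ?_⟩
      exact sMap_endpoints _ _
    have hlb : ∀ N ∈ {N : ℕ∞ | ∃ k : ℕ, N = k ∧
        ∃ U : Fin k → Set ↥(conf2 ×ˢ conf2),
        (∀ i, IsOpen (U i)) ∧ (⋃ i, U i) = univ ∧
        ∀ i, ∃ s : C(U i, C(unitInterval, ℝ × ℝ)),
          ∀ p : U i, s p 0 = (p.1.1 : (ℝ × ℝ) × (ℝ × ℝ)).1 ∧
            s p 1 = (p.1.1 : (ℝ × ℝ) × (ℝ × ℝ)).2}, (1 : ℕ∞) ≤ N := by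
      rintro N ⟨k, rfl, U, -, hcov, -⟩
      cases k with
      | zero =>
        exfalso
        have hpt : ((0 : ℝ), (1 : ℝ)) ∈ conf2 := by norm_num [conf2]
        have hm : (⟨((0, 1), (0, 1)), ⟨hpt, hpt⟩⟩ : ↥(conf2 ×ˢ conf2)) ∈ ⋃ i, U i := by
          rw [hcov]; trivial
        obtain ⟨i, -⟩ := mem_iUnion.mp hm
        exact i.elim0
      | succ k => exact_mod_cast Nat.succ_le_succ (Nat.zero_le k)
    exact le_antisymm (sInf_le hmem) (le_sInf hlb)
end
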